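/- Let X be a non-degenerate A-correspondence. There exists a smallest fully X-invariant ideal I_X ⊴ A (an ideal I is fully X-invariant if X^{-1}(I) = I). Moreover, I_X = 0 if and only if the left action φ_X is injective. -/
import Mathlib


/-! Basic framework: C*-correspondences over (possibly non-unital) C*-algebras,
interior tensor products (characterized by their universal properties),
closed ideals, and unitary isomorphisms of correspondences. -/

noncomputable section

/-- A (non-degenerate) A–B C*-correspondence: a right Hilbert `B`-module `X`
together with a left action of `A` by adjointable operators. -/
structure Corr (A B : Type) [NonUnitalCStarAlgebra A] [NonUnitalCStarAlgebra B] : Type 1 where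
  X : Type
  [grp : NormedAddCommGroup X]
  [nsc : NormedSpace ℂ X]
  [cpl : CompleteSpace X]
  /-- the right action of `B` -/
  sm : X → B → X
  /-- the `B`-valued inner product (linear in the second variable) -/
  ip : X → X → B
  /-- the left action of `A` -/
  φ : A → X → X
  sm_add : ∀ x y b, sm (x + y) b = sm x b + sm y b
  sm_add' : ∀ x b c, sm x (b + c) = sm x b + sm x c
  sm_mul : ∀ x b c, sm (sm x b) c = sm x (b * c)
  sm_smul : ∀ (t : ℂ) x b, sm (t • x) b = t • sm x b
  sm_smul' : ∀ (t : ℂ) x b, sm x (t • b) = t • sm x b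
  ip_add : ∀ x y z, ip x (y + z) = ip x y + ip x z
  ip_smul : ∀ (t : ℂ) x y, ip x (t • y) = t • ip x y
  ip_sm : ∀ x y b, ip x (sm y b) = ip x y * b
  ip_star : ∀ x y, star (ip x y) = ip y x
  ip_pos : ∀ x, ∃ b, ip x x = star b * b
  ip_norm : ∀ x, ‖x‖ ^ 2 = ‖ip x x‖
  φ_add : ∀ a x y, φ a (x + y) = φ a x + φ a y
  φ_add' : ∀ a b x, φ (a + b) x = φ a x + φ b x
  φ_smul : ∀ a (t : ℂ) x, φ a (t • x) = t • φ a x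
  φ_smul' : ∀ (t : ℂ) a x, φ (t • a) x = t • φ a x
  φ_mul : ∀ a b x, φ (a * b) x = φ a (φ b x)
  φ_adj : ∀ a x y, ip (φ a x) y = ip x (φ (star a) y)
  /-- non-degeneracy of the left action -/
  nondeg : closure (Submodule.span ℂ {z | ∃ a x, z = φ a x} : Set X) = Set.univ

attribute [instance] Corr.grp Corr.nsc Corr.cpl

variable {A B C : Type} [NonUnitalCStarAlgebra A] [NonUnitalCStarAlgebra B]
  [NonUnitalCStarAlgebra C]

/-- `Z.setR I` is the closed submodule `Z·I` of `Z`. -/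
def Corr.setR (Z : Corr A B) (I : Set B) : Set Z.X :=
  closure (Submodule.span ℂ {x | ∃ ξ b, b ∈ I ∧ x = Z.sm ξ b} : Set Z.X)

/-- `Z.setL I` is the closed subspace `I·Z` of `Z`. -/
def Corr.setL (Z : Corr A B) (I : Set A) : Set Z.X :=
  closure (Submodule.span ℂ {x | ∃ a ξ, a ∈ I ∧ x = Z.φ a ξ} : Set Z.X)

/-- `Z⁻¹(I) = {a ∈ A : φ_Z(a)Z ⊆ ZI}`. -/
def Corr.inv (Z : Corr A B) (I : Set B) : Set A := {a | ∀ ξ, Z.φ a ξ ∈ Z.setR I}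

/-- The closed ideal of `B` generated by the inner products of `Z`. -/
def Corr.ipSet (Z : Corr A B) : Set B :=
  closure (Submodule.span ℂ {b | ∃ x y, b = Z.ip x y} : Set B)

/-- A generalized compact operator on the underlying Hilbert module of a correspondence:
one that is approximable in operator norm by finite sums of "rank one" operators
`θ_{ξ,η} : z ↦ ξ·⟨η,z⟩`. -/
def Corr.IsCompactOp (Z : Corr A B) (f : Z.X → Z.X) : Prop :=
  ∀ ε > (0 : ℝ), ∃ (n : ℕ) (ξ η : Fin n → Z.X),
    ∀ z, ‖f z - ∑ i, Z.sm (ξ i) (Z.ip (η i) z)‖ ≤ ε * ‖z‖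

/-- A closed (two-sided, automatically self-adjoint) ideal of a C*-algebra, as a set. -/
structure IsCIdeal {B : Type} [NonUnitalCStarAlgebra B] (I : Set B) : Prop where
  isClosed : IsClosed I
  zero_mem : (0 : B) ∈ I
  add_mem : ∀ x y, x ∈ I → y ∈ I → x + y ∈ I
  smul_mem : ∀ (t : ℂ) x, x ∈ I → t • x ∈ I
  mul_left_mem : ∀ b x, x ∈ I → b * x ∈ I
  mul_right_mem : ∀ b x, x ∈ I → x * b ∈ I

/-- `t : Z₁ × Z₂ → T` exhibits `T` as the interior tensor product `Z₁ ⊗_B Z₂`. -/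
structure IsTensor (Z₁ : Corr A B) (Z₂ : Corr B C) (T : Corr A C)
    (t : Z₁.X → Z₂.X → T.X) : Prop where
  add_left : ∀ x x' y, t (x + x') y = t x y + t x' y
  add_right : ∀ x y y', t x (y + y') = t x y + t x y'
  smul_left : ∀ (c : ℂ) x y, t (c • x) y = c • t x y
  balanced : ∀ x b y, t (Z₁.sm x b) y = t x (Z₂.φ b y)
  sm_right : ∀ x y c, t x (Z₂.sm y c) = T.sm (t x y) c
  act_left : ∀ a x y, T.φ a (t x y) = t (Z₁.φ a x) y
  inner : ∀ x x' y y', T.ip (t x y) (t x' y') = Z₂.ip y (Z₂.φ (Z₁.ip x x') y')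
  dense : closure (Submodule.span ℂ {z | ∃ x y, z = t x y} : Set T.X) = Set.univ

/-- `X ≅ Z₁ ⊗ Z₂` (unitary isomorphism with the interior tensor product). -/
def IsTensorProd (Z₁ : Corr A B) (Z₂ : Corr B C) (T : Corr A C) : Prop :=
  ∃ t, IsTensor Z₁ Z₂ T t

/-- A unitary isomorphism of A–B correspondences. -/
def CorrIso (Z W : Corr A B) : Prop :=
  ∃ u : Z.X → W.X, Function.Surjective u ∧ (∀ x y, u (x + y) = u x + u y) ∧
    (∀ (c : ℂ) x, u (c • x) = c • u x) ∧ (∀ a x, u (Z.φ a x) = W.φ a (u x)) ∧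
    (∀ x b, u (Z.sm x b) = W.sm (u x) b) ∧ (∀ x y, W.ip (u x) (u y) = Z.ip x y)

end

noncomputable section Aux

namespace Corr

variable {A B : Type} [NonUnitalCStarAlgebra A] [NonUnitalCStarAlgebra B] (Z : Corr A B)

lemma ip_zero_right (x : Z.X) : Z.ip x 0 = 0 := by
  have h := Z.ip_smul 0 x 0
  simpa using h

lemma ip_neg_right (x y : Z.X) : Z.ip x (-y) = - Z.ip x y := by
  have h := Z.ip_smul (-1) x y
  simpa using h

lemma ip_sub_right (x y z : Z.X) : Z.ip x (y - z) = Z.ip x y - Z.ip x z := by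
  rw [sub_eq_add_neg, Z.ip_add, Z.ip_neg_right, sub_eq_add_neg]

lemma ip_add_left (x y z : Z.X) : Z.ip (x + y) z = Z.ip x z + Z.ip y z := by
  rw [← Z.ip_star z, Z.ip_add, star_add, Z.ip_star, Z.ip_star]

lemma ip_smul_left (t : ℂ) (x y : Z.X) : Z.ip (t • x) y = star t • Z.ip x y := by
  rw [← Z.ip_star y, Z.ip_smul, star_smul, Z.ip_star]

lemma eq_zero_of_ip_self (x : Z.X) (h : Z.ip x x = 0) : x = 0 := by
  have h2 := Z.ip_norm x
  rw [h, norm_zero] at h2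
  have : ‖x‖ = 0 := by nlinarith [norm_nonneg x]
  exact norm_eq_zero.mp this

lemma eq_zero_of_forall_ip (w : Z.X) (h : ∀ y, Z.ip y w = 0) : w = 0 :=
  Z.eq_zero_of_ip_self w (h w)

lemma φ_zero_right (a : A) : Z.φ a 0 = 0 := by
  have h := Z.φ_smul a 0 0
  simpa using h

lemma φ_zero_left (x : Z.X) : Z.φ 0 x = 0 := by
  have h := Z.φ_smul' 0 0 x
  simpa using h

lemma φ_neg (a : A) (x : Z.X) : Z.φ (-a) x = - Z.φ a x := by
  have h := Z.φ_smul' (-1) a x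
  simpa using h

lemma φ_sub (a b : A) (x : Z.X) : Z.φ (a - b) x = Z.φ a x - Z.φ b x := by
  rw [sub_eq_add_neg, Z.φ_add', Z.φ_neg, sub_eq_add_neg]

lemma sm_zero (x : Z.X) : Z.sm x 0 = 0 := by
  have h := Z.sm_smul' 0 x 0
  simpa using h

lemma ip_φ (a : A) (x y : Z.X) : Z.ip y (Z.φ a x) = Z.ip (Z.φ (star a) y) x := by
  calc Z.ip y (Z.φ a x) = star (Z.ip (Z.φ a x) y) := (Z.ip_star _ _).symm
    _ = star (Z.ip x (Z.φ (star a) y)) := by rw [Z.φ_adj]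
    _ = Z.ip (Z.φ (star a) y) x := Z.ip_star _ _

lemma φ_sm (a : A) (x : Z.X) (b : B) : Z.φ a (Z.sm x b) = Z.sm (Z.φ a x) b := by
  have key : ∀ y, Z.ip y (Z.φ a (Z.sm x b) - Z.sm (Z.φ a x) b) = 0 := by
    intro y
    rw [Z.ip_sub_right, Z.ip_φ, Z.ip_sm, Z.ip_sm, Z.ip_φ, sub_self]
  exact sub_eq_zero.mp (Z.eq_zero_of_forall_ip _ key)

/-- Extension of the left action to the unitization. -/
def φe (u : Unitization ℂ A) (x : Z.X) : Z.X := u.fst • x + Z.φ u.snd x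

lemma φe_mul (u v : Unitization ℂ A) (x : Z.X) :
    Z.φe (u * v) x = Z.φe u (Z.φe v x) := by
  simp only [φe, Unitization.fst_mul, Unitization.snd_mul, Z.φ_add', Z.φ_smul', Z.φ_mul,
    Z.φ_add, Z.φ_smul, mul_smul, smul_add]
  abel

lemma φe_adj (u : Unitization ℂ A) (x y : Z.X) :
    Z.ip (Z.φe u x) y = Z.ip x (Z.φe (star u) y) := by
  simp only [φe, Unitization.fst_star, Unitization.snd_star]
  rw [Z.ip_add_left, Z.ip_add, Z.ip_smul_left, Z.ip_smul, Z.φ_adj]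

lemma φe_pos (u : Unitization ℂ A) (x : Z.X) :
    ∃ g, Z.ip x (Z.φe (star u * u) x) = star g * g := by
  obtain ⟨g, hg⟩ := Z.ip_pos (Z.φe u x)
  refine ⟨g, ?_⟩
  rw [Z.φe_mul, ← Z.φe_adj, hg]

lemma norm_φ_apply_le (a : A) (x : Z.X) : ‖Z.φ a x‖ ≤ ‖a‖ * ‖x‖ := by
  set c : A := star a * a with hc
  have hb : Z.ip (Z.φ a x) (Z.φ a x) = Z.ip x (Z.φ c x) := by
    rw [Z.φ_adj, ← Z.φ_mul]
  have hcoe : ((c : A) : Unitization ℂ A) = star (a : Unitization ℂ A) * a := by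
    rw [hc, Unitization.inr_mul, Unitization.inr_star]
  have hc0 : (0 : Unitization ℂ A) ≤ (c : Unitization ℂ A) := by
    rw [hcoe]; exact star_mul_self_nonneg _
  have hle : (c : Unitization ℂ A) ≤ algebraMap ℝ _ ‖c‖ := by
    have h1 : IsSelfAdjoint (c : Unitization ℂ A) := IsSelfAdjoint.of_nonneg hc0
    have h2 := IsSelfAdjoint.le_algebraMap_norm_self h1
    rwa [Unitization.norm_inr] at h2
  set y : Unitization ℂ A := algebraMap ℝ _ ‖c‖ - (c : Unitization ℂ A) with hy
  have hy0 : (0 : Unitization ℂ A) ≤ y := sub_nonneg.2 hle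
  set f := CFC.sqrt y with hfdef
  have hff : f * f = y := CFC.sqrt_mul_sqrt_self y hy0
  have hfsa : star f = f := IsSelfAdjoint.of_nonneg (CFC.sqrt_nonneg (a := y))
  obtain ⟨g, hg⟩ := Z.φe_pos f x
  rw [hfsa, hff] at hg
  have hφey : Z.φe y x = ((‖c‖ : ℝ) : ℂ) • x - Z.φ c x := by
    have hfst : y.fst = ((‖c‖ : ℝ) : ℂ) := by
      simp [hy, IsScalarTower.algebraMap_apply ℝ ℂ (Unitization ℂ A),
        Unitization.algebraMap_eq_inl, Unitization.fst_inl, Unitization.fst_inr,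
        sub_eq_add_neg, Unitization.fst_add, Unitization.fst_neg, Complex.coe_algebraMap]
    have hsnd : y.snd = -c := by
      simp [hy, IsScalarTower.algebraMap_apply ℝ ℂ (Unitization ℂ A),
        Unitization.algebraMap_eq_inl, Unitization.snd_inl, Unitization.snd_inr,
        sub_eq_add_neg, Unitization.snd_add, Unitization.snd_neg]
    rw [φe, hfst, hsnd, Z.φ_neg, sub_eq_add_neg]
  rw [hφey, Z.ip_sub_right, Z.ip_smul] at hg
  obtain ⟨h, hh⟩ := Z.ip_pos (Z.φ a x)
  have h1 : (0 : Unitization ℂ B) ≤ ((Z.ip (Z.φ a x) (Z.φ a x) : B) : Unitization ℂ B) := by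
    rw [hh, Unitization.inr_mul, Unitization.inr_star]
    exact star_mul_self_nonneg _
  have h2 : ((Z.ip (Z.φ a x) (Z.φ a x) : B) : Unitization ℂ B)
      ≤ ((((‖c‖ : ℝ) : ℂ) • Z.ip x x : B) : Unitization ℂ B) := by
    rw [← sub_nonneg, ← Unitization.inr_sub ℂ]
    have h3 : (((‖c‖ : ℝ) : ℂ) • Z.ip x x - Z.ip (Z.φ a x) (Z.φ a x)) = star g * g := by
      rw [hb]; exact hg
    rw [h3, Unitization.inr_mul, Unitization.inr_star]
    exact star_mul_self_nonneg _
  have h3 : ‖Z.ip (Z.φ a x) (Z.φ a x)‖ ≤ ‖((‖c‖ : ℝ) : ℂ) • Z.ip x x‖ := by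
    have h4 := CStarAlgebra.norm_le_norm_of_nonneg_of_le h1 h2
    rwa [Unitization.norm_inr, Unitization.norm_inr] at h4
  have h5 : ‖Z.φ a x‖ ^ 2 ≤ (‖a‖ * ‖x‖) ^ 2 := by
    rw [Z.ip_norm]
    calc ‖Z.ip (Z.φ a x) (Z.φ a x)‖ ≤ ‖((‖c‖ : ℝ) : ℂ) • Z.ip x x‖ := h3
      _ = ‖c‖ * ‖Z.ip x x‖ := by
          rw [norm_smul, Complex.norm_real, Real.norm_eq_abs,
            abs_of_nonneg (norm_nonneg c)]
      _ = ‖c‖ * ‖x‖ ^ 2 := by rw [← Z.ip_norm]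
      _ = (‖a‖ * ‖x‖) ^ 2 := by
          rw [hc, CStarRing.norm_star_mul_self]; ring
  nlinarith [norm_nonneg (Z.φ a x), mul_nonneg (norm_nonneg a) (norm_nonneg x), h5]

/-- The left action by `a` as a continuous linear map on `Z.X`. -/
def φCLM (a : A) : Z.X →L[ℂ] Z.X :=
  LinearMap.mkContinuous
    { toFun := Z.φ a, map_add' := Z.φ_add a, map_smul' := fun t x => Z.φ_smul a t x }
    ‖a‖ (fun x => Z.norm_φ_apply_le a x)

/-- The left action applied to a fixed vector, as a continuous linear map `A → Z.X`. -/
def φCLM' (x : Z.X) : A →L[ℂ] Z.X :=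
  LinearMap.mkContinuous
    { toFun := fun a => Z.φ a x, map_add' := fun a b => Z.φ_add' a b x,
      map_smul' := fun t a => Z.φ_smul' t a x }
    ‖x‖ (fun a => by rw [mul_comm]; exact Z.norm_φ_apply_le a x)

lemma setR_eq (I : Set B) :
    Z.setR I =
      ((Submodule.span ℂ {x | ∃ ξ b, b ∈ I ∧ x = Z.sm ξ b}).topologicalClosure : Set Z.X) :=
  (Submodule.topologicalClosure_coe _).symm

lemma setR_zero_mem (I : Set B) : (0 : Z.X) ∈ Z.setR I :=
  subset_closure (Submodule.zero_mem _)

lemma setR_add_mem {I : Set B} {x y : Z.X} (hx : x ∈ Z.setR I) (hy : y ∈ Z.setR I) :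
    x + y ∈ Z.setR I := by
  rw [Z.setR_eq] at hx hy ⊢
  exact Submodule.add_mem _ hx hy

lemma setR_smul_mem {I : Set B} (t : ℂ) {x : Z.X} (hx : x ∈ Z.setR I) :
    t • x ∈ Z.setR I := by
  rw [Z.setR_eq] at hx ⊢
  exact Submodule.smul_mem _ t hx

lemma setR_mono {I J : Set B} (hIJ : I ⊆ J) : Z.setR I ⊆ Z.setR J := by
  refine closure_mono ?_
  refine Submodule.span_mono ?_
  rintro x ⟨ξ, b, hb, rfl⟩
  exact ⟨ξ, b, hIJ hb, rfl⟩

lemma φ_mem_setR {I : Set B} (b : A) {w : Z.X} (hw : w ∈ Z.setR I) :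
    Z.φ b w ∈ Z.setR I := by
  set gens : Set Z.X := {x | ∃ ξ c, c ∈ I ∧ x = Z.sm ξ c} with hgens
  have hmaps : Set.MapsTo (Z.φCLM b) (Submodule.span ℂ gens : Set Z.X)
      (Submodule.span ℂ gens : Set Z.X) := by
    intro v hv
    induction hv using Submodule.span_induction with
    | mem x hx =>
      obtain ⟨ξ, c, hc, rfl⟩ := hx
      have : (Z.φCLM b) (Z.sm ξ c) = Z.sm (Z.φ b ξ) c := Z.φ_sm b ξ c
      rw [this]
      exact Submodule.subset_span ⟨Z.φ b ξ, c, hc, rfl⟩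
    | zero => simpa using Submodule.zero_mem (Submodule.span ℂ gens)
    | add x y _ _ hx hy => simpa [map_add] using Submodule.add_mem _ hx hy
    | smul t x _ hx => simpa [map_smul] using Submodule.smul_mem _ t hx
  exact map_mem_closure (Z.φCLM b).continuous hw hmaps

lemma inv_isCIdeal (I : Set B) : IsCIdeal (Z.inv I) := by
  constructor
  · have heq : Z.inv I = ⋂ ξ : Z.X, (Z.φCLM' ξ) ⁻¹' (Z.setR I) := by
      ext a
      simp only [Corr.inv, Set.mem_setOf_eq, Set.mem_iInter, Set.mem_preimage]
      rfl
    rw [heq]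
    exact isClosed_iInter fun ξ => (isClosed_closure).preimage (Z.φCLM' ξ).continuous
  · intro ξ
    rw [Z.φ_zero_left]
    exact Z.setR_zero_mem I
  · intro x y hx hy ξ
    rw [Z.φ_add']
    exact Z.setR_add_mem (hx ξ) (hy ξ)
  · intro t x hx ξ
    rw [Z.φ_smul']
    exact Z.setR_smul_mem t (hx ξ)
  · intro b x hx ξ
    rw [Z.φ_mul]
    exact Z.φ_mem_setR b (hx ξ)
  · intro b x hx ξ
    rw [Z.φ_mul]
    exact hx (Z.φ b ξ)

lemma inv_mono {I J : Set B} (hIJ : I ⊆ J) : Z.inv I ⊆ Z.inv J :=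
  fun a ha ξ => Z.setR_mono hIJ (ha ξ)

lemma setR_singleton_zero : Z.setR ({0} : Set B) = {0} := by
  have hgens : {x | ∃ ξ b, b ∈ ({0} : Set B) ∧ x = Z.sm ξ b} = ({0} : Set Z.X) := by
    ext x
    constructor
    · rintro ⟨ξ, b, hb, rfl⟩
      rw [Set.mem_singleton_iff] at hb
      rw [hb, Z.sm_zero]
      rfl
    · rintro rfl
      exact ⟨0, 0, rfl, (Z.sm_zero 0).symm⟩
  rw [Corr.setR, hgens, Submodule.span_zero_singleton]
  simpa using closure_singleton

end Corr

end Aux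

/-- there is a smallest fully `X`-invariant closed ideal `I_X ⊴ A`
(`I` is fully `X`-invariant when `X⁻¹(I) = I`), and `I_X = 0` iff the left action
`φ_X` is injective. -/
theorem stmt7 {A : Type} [NonUnitalCStarAlgebra A] (X : Corr A A) :
    ∃ I : Set A, IsCIdeal I ∧ X.inv I = I ∧
      (∀ J : Set A, IsCIdeal J → X.inv J = J → I ⊆ J) ∧
      (I = {0} ↔ Function.Injective X.φ) := by
  set P : Set A := ⋂₀ {J : Set A | X.inv J ⊆ J} with hP
  have hPsub : ∀ J : Set A, X.inv J ⊆ J → P ⊆ J := fun J hJ =>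
    Set.sInter_subset_of_mem hJ
  have hpre : X.inv P ⊆ P := by
    intro a ha
    exact Set.mem_sInter.mpr fun J hJ => hJ (X.inv_mono (hPsub J hJ) ha)
  have hfix : X.inv P = P := by
    refine subset_antisymm hpre ?_
    exact hPsub (X.inv P) (X.inv_mono hpre)
  have hzero_mem : ∀ J : Set A, X.inv J ⊆ J → (0 : A) ∈ J := by
    intro J hJ
    refine hJ ?_
    intro ξ
    rw [X.φ_zero_left]
    exact X.setR_zero_mem J
  have hker : ∀ a : A, a ∈ X.inv ({0} : Set A) ↔ ∀ ξ, X.φ a ξ = 0 := by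
    intro a
    constructor
    · intro ha ξ
      have := ha ξ
      rwa [X.setR_singleton_zero, Set.mem_singleton_iff] at this
    · intro ha ξ
      rw [X.setR_singleton_zero, Set.mem_singleton_iff]
      exact ha ξ
  refine ⟨P, hfix ▸ X.inv_isCIdeal P, hfix, ?_, ?_, ?_⟩
  · intro J _ hJfix
    exact hPsub J (le_of_eq hJfix)
  · -- P = {0} → injective
    intro hP0
    intro a b hab
    have hdiff : ∀ ξ, X.φ (a - b) ξ = 0 := by
      intro ξ
      rw [X.φ_sub, congrFun hab ξ, sub_self]
    have hmem : a - b ∈ X.inv ({0} : Set A) := (hker _).mpr hdiff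
    rw [← hP0, hfix, hP0, Set.mem_singleton_iff] at hmem
    exact sub_eq_zero.mp hmem
  · -- injective → P = {0}
    intro hinj
    have hpre0 : X.inv ({0} : Set A) ⊆ ({0} : Set A) := by
      intro a ha
      have h0 : X.φ a = X.φ 0 := by
        funext ξ
        rw [X.φ_zero_left]
        exact (hker a).mp ha ξ
      exact hinj h0
    refine subset_antisymm (hPsub _ hpre0) ?_
    intro z hz
    rw [Set.mem_singleton_iff] at hz
    subst hz
    exact Set.mem_sInter.mpr fun J hJ => hzero_mem J hJ
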